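/- Let F be a set of blue points, let 1 ≤ k ≤ |F|, and suppose that the weight of F_k is δ−1 at time t and δ at time t+1. Then the transposition τ_{t+1} swaps some point f of F with a point x not in F, and moreover: either (i) τ_{t+1} moves f to the left and x is red, in which case τ_{t+1} is balanced and in π^t there are exactly k−1 points of F strictly to the left of the transposed pair; or (ii) τ_{t+1} moves f to the right and x is a blue point not in F. -/

import Mathlib

open Finset

/-- An allowable sequence on `n` points (the points are the elements of `Fin n`).
`pos t x` is the position (from left to right, `0`-based) of point `x`
in the linear ordering `π^t`. -/
structure AllowableSeq (n : ℕ) where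
  pos : ℤ → Equiv.Perm (Fin n)
  adj : ∀ t : ℤ, ∃ p q : Fin n,
    ((pos t q : ℕ) = (pos t p : ℕ) + 1) ∧
    pos (t + 1) = (Equiv.swap p q).trans (pos t)
  rev : ∀ t : ℤ, pos (t + (n.choose 2 : ℤ)) = (pos t).trans Fin.revPerm

namespace AllowableSeq

variable {n : ℕ}

/-- The weight of a point: `+1` for blue, `-1` for red. -/
def wt (blue : Fin n → Bool) (x : Fin n) : ℤ := if blue x then 1 else -1

/-- The transposition `τ_{t+1}` (leading from `π^t` to `π^{t+1}`) swaps the points `p` and `q`. -/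
def SwapsAt (A : AllowableSeq n) (t : ℤ) (p q : Fin n) : Prop :=
  p ≠ q ∧ A.pos (t + 1) = (Equiv.swap p q).trans (A.pos t)

/-- `τ_{t+1}` is a balanced transposition swapping `p` and `q`: one of them is blue and the
other red, and the total weight of the points strictly to the left of the adjacent
pair in `π^t` equals `δ`. -/
def BalancedSwap (A : AllowableSeq n) (blue : Fin n → Bool) (δ : ℤ) (t : ℤ)
    (p q : Fin n) : Prop :=
  A.SwapsAt t p q ∧ (blue p ↔ ¬ blue q) ∧
  (∑ x : Fin n, if (A.pos t x : ℕ) < min (A.pos t p : ℕ) (A.pos t q : ℕ)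
      then wt blue x else 0) = δ

/-- The set of unordered pairs of points swapped by some balanced transposition of the
allowable sequence; its cardinality is the number of distinct balanced transpositions. -/
def balancedPairs (A : AllowableSeq n) (blue : Fin n → Bool) (δ : ℤ) : Set (Sym2 (Fin n)) :=
  { s | ∃ p q t, s = s(p, q) ∧ A.BalancedSwap blue δ t p q }

/-- A curve: a map `ℤ → Fin n` that is periodic with period `2 * C(n,2)`. -/
def IsCurve (A : AllowableSeq n) (γ : ℤ → Fin n) : Prop :=
  ∀ t : ℤ, γ (t + 2 * (n.choose 2 : ℤ)) = γ t

/-- The weight of a curve `γ` at time `t`: the sum of the weights of the points lying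
strictly to the left of `γ t` in `π^t`. -/
def cweight (A : AllowableSeq n) (blue : Fin n → Bool) (γ : ℤ → Fin n) (t : ℤ) : ℤ :=
  ∑ x : Fin n, if A.pos t x < A.pos t (γ t) then wt blue x else 0

/-- `γ` is the curve `Q_k` (with `k` 1-based): at every time `t`, `γ t` is the `k`-th point
of `Q` from left to right in `π^t`, i.e. `γ t ∈ Q` and exactly `k - 1` points of `Q` lie
strictly to the left of `γ t`. -/
def IsKth (A : AllowableSeq n) (Q : Finset (Fin n)) (k : ℕ) (γ : ℤ → Fin n) : Prop :=
  ∀ t : ℤ, γ t ∈ Q ∧ (Q.filter (fun x => A.pos t x < A.pos t (γ t))).card = k - 1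

/-- The mirror curve `γ̄` of `γ`, defined by `γ̄ (t + C(n,2)) = γ t`. -/
def mirror (γ : ℤ → Fin n) : ℤ → Fin n := fun t => γ (t - (n.choose 2 : ℤ))

/-- A border: a curve that is either blue and `≥δ` or red and `≤δ`, such that
(I) consecutive values are equal or have no point of the same colour between them, and
(II) it lies strictly to the left of its mirror curve. -/
def IsBorder (A : AllowableSeq n) (blue : Fin n → Bool) (δ : ℤ) (γ : ℤ → Fin n) : Prop :=
  A.IsCurve γ ∧
  (∀ t : ℤ, A.pos t (γ t) < A.pos t (mirror γ t)) ∧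
  (((∀ t : ℤ, blue (γ t) = true) ∧ (∀ t : ℤ, δ ≤ A.cweight blue γ t) ∧
      ∀ t : ℤ, γ (t + 1) = γ t ∨ ∀ x : Fin n, blue x = true →
        ¬ (min (A.pos (t+1) (γ t)) (A.pos (t+1) (γ (t+1))) < A.pos (t+1) x ∧
           A.pos (t+1) x < max (A.pos (t+1) (γ t)) (A.pos (t+1) (γ (t+1)))))
   ∨ ((∀ t : ℤ, blue (γ t) = false) ∧ (∀ t : ℤ, A.cweight blue γ t ≤ δ) ∧
      ∀ t : ℤ, γ (t + 1) = γ t ∨ ∀ x : Fin n, blue x = false →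
        ¬ (min (A.pos (t+1) (γ t)) (A.pos (t+1) (γ (t+1))) < A.pos (t+1) x ∧
           A.pos (t+1) x < max (A.pos (t+1) (γ t)) (A.pos (t+1) (γ (t+1))))))

/-- `Γ` is `⪯`-maximal among all borders: it is a border and no border lies strictly
to its right. -/
def IsMaxBorder (A : AllowableSeq n) (blue : Fin n → Bool) (δ : ℤ) (Γ : ℤ → Fin n) : Prop :=
  A.IsBorder blue δ Γ ∧
  ∀ γ : ℤ → Fin n, A.IsBorder blue δ γ → ¬ (∀ t : ℤ, A.pos t (Γ t) < A.pos t (γ t))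

/-- The curve `α` has the weight change `a ⇝ b` between the curves `lo` and `hi`:
at some time `t` its weight changes from `a` to `b`, the change occurring to the right
of `lo` and to the left of `hi`. -/
def HasChangeBetween (A : AllowableSeq n) (blue : Fin n → Bool) (a b : ℤ)
    (α lo hi : ℤ → Fin n) : Prop :=
  ∃ t : ℤ, A.cweight blue α t = a ∧ A.cweight blue α (t+1) = b ∧
    A.pos t (lo t) ≤ A.pos t (α t) ∧ A.pos (t+1) (lo (t+1)) < A.pos (t+1) (α (t+1)) ∧
    A.pos t (α t) ≤ A.pos t (hi t) ∧ A.pos (t+1) (α (t+1)) < A.pos (t+1) (hi (t+1))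

/-- The number of blue points strictly to the left of the adjacent pair `p, q` in `π^t`. -/
def blueLeftPair (A : AllowableSeq n) (blue : Fin n → Bool) (t : ℤ) (p q : Fin n) : ℕ :=
  (Finset.univ.filter (fun y => blue y = true ∧
    (A.pos t y : ℕ) < min (A.pos t p : ℕ) (A.pos t q : ℕ))).card

end AllowableSeq

open AllowableSeq

private lemma sum_corr {n : ℕ} (g h : Fin n → ℤ) (p q : Fin n) (hne : p ≠ q)
    (hoff : ∀ x, x ≠ p → x ≠ q → g x = h x) :
    ∑ x : Fin n, g x = (∑ x : Fin n, h x) + (g p - h p) + (g q - h q) := by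
  have key : ∀ x : Fin n, g x = h x +
      ((if x = p then g p - h p else 0) + (if x = q then g q - h q else 0)) := by
    intro x
    by_cases h1 : x = p
    · subst h1; simp [hne]
    · by_cases h2 : x = q
      · subst h2; simp [h1]
      · simp [h1, h2, hoff x h1 h2]
  rw [Finset.sum_congr rfl fun x _ => key x]
  rw [Finset.sum_add_distrib, Finset.sum_add_distrib]
  simp [Finset.sum_ite_eq']
  ring

private lemma kth_unique {n : ℕ} (π : Equiv.Perm (Fin n)) (F : Finset (Fin n)) {c₁ c₂ : Fin n}
    (h1 : c₁ ∈ F) (h2 : c₂ ∈ F)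
    (h : (F.filter fun x => π x < π c₁).card = (F.filter fun x => π x < π c₂).card) :
    c₁ = c₂ := by
  have key : ∀ (a b : Fin n), a ∈ F → b ∈ F → π a < π b →
      (F.filter fun x => π x < π a).card < (F.filter fun x => π x < π b).card := by
    intro a b ha hb hlt
    apply Finset.card_lt_card
    rw [Finset.ssubset_iff_of_subset (Finset.monotone_filter_right F fun x _ hx => lt_trans hx hlt)]
    exact ⟨a, Finset.mem_filter.mpr ⟨ha, hlt⟩, fun hc => lt_irrefl _ (Finset.mem_filter.mp hc).2⟩
  rcases lt_trichotomy (π c₁) (π c₂) with hlt | heq | hlt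
  · exact absurd h (Nat.ne_of_lt (key _ _ h1 h2 hlt))
  · exact π.injective heq
  · exact absurd h.symm (Nat.ne_of_lt (key _ _ h2 h1 hlt))

theorem up_change_detects (n b r δ : ℕ) (A : AllowableSeq n) (blue : Fin n → Bool)
    (hn : n = b + r)
    (hb : (Finset.univ.filter (fun x => blue x = true)).card = b)
    (hr : (Finset.univ.filter (fun x => blue x = false)).card = r)
    (hbr : b = r + 2 * δ)
    (F : Finset (Fin n)) (hF : ∀ x ∈ F, blue x = true)
    (k : ℕ) (hk1 : 1 ≤ k) (hk2 : k ≤ F.card)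
    (γ : ℤ → Fin n) (hγ : A.IsKth F k γ) (t : ℤ)
    (h1 : A.cweight blue γ t = (δ : ℤ) - 1) (h2 : A.cweight blue γ (t+1) = (δ : ℤ)) :
    ∃ f x : Fin n, f ∈ F ∧ x ∉ F ∧ A.SwapsAt t f x ∧
      (((A.pos t f : ℕ) = (A.pos t x : ℕ) + 1 ∧ blue x = false ∧
          A.BalancedSwap blue (δ : ℤ) t f x ∧
          (F.filter (fun y =>
            (A.pos t y : ℕ) < min (A.pos t f : ℕ) (A.pos t x : ℕ))).card = k - 1) ∨
       ((A.pos t x : ℕ) = (A.pos t f : ℕ) + 1 ∧ blue x = true)) := by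
  classical
  obtain ⟨p, q, hpq, hs⟩ := A.adj t
  have hpq' : p ≠ q := by intro h; rw [h] at hpq; omega
  have posE : ∀ x, (A.pos (t+1) x : ℕ) = (A.pos t (Equiv.swap p q x) : ℕ) := by
    intro x; rw [hs]; rfl
  have np : ∀ x : Fin n, x ≠ p → (A.pos t x : ℕ) ≠ (A.pos t p : ℕ) := by
    intro x hx h
    exact hx ((A.pos t).injective (Fin.val_injective h))
  have nq : ∀ x : Fin n, x ≠ q → (A.pos t x : ℕ) ≠ (A.pos t p : ℕ) + 1 := by
    intro x hx h
    exact hx ((A.pos t).injective (Fin.val_injective (h.trans hpq.symm)))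
  have posP : (A.pos (t+1) p : ℕ) = (A.pos t p : ℕ) + 1 := by
    rw [posE, Equiv.swap_apply_left, hpq]
  have posQ : (A.pos (t+1) q : ℕ) = (A.pos t p : ℕ) := by
    rw [posE, Equiv.swap_apply_right]
  have posO : ∀ x : Fin n, x ≠ p → x ≠ q → (A.pos (t+1) x : ℕ) = (A.pos t x : ℕ) := by
    intro x h1 h2; rw [posE, Equiv.swap_apply_of_ne_of_ne h1 h2]
  obtain ⟨hcF, hcard⟩ := hγ t
  obtain ⟨hcF1, hcard1⟩ := hγ (t + 1)
  have cw : ∀ s : ℤ, A.cweight blue γ s =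
      ∑ x : Fin n, if (A.pos s x : ℕ) < (A.pos s (γ s) : ℕ) then wt blue x else 0 := by
    intro s; unfold cweight; exact Finset.sum_congr rfl fun x _ => by simp only [Fin.lt_def]
  by_cases hcp : γ t = p
  · by_cases hqF : q ∈ F
    · -- both p and q in F: contradiction, weight unchanged
      exfalso
      have hpF : p ∈ F := by rw [← hcp]; exact hcF
      have hswap : ∀ y : Fin n, y ∈ F → Equiv.swap p q y ∈ F := by
        intro y hy
        rcases eq_or_ne y p with rfl | h1
        · rwa [Equiv.swap_apply_left]
        rcases eq_or_ne y q with rfl | h2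
        · rwa [Equiv.swap_apply_right]
        · rwa [Equiv.swap_apply_of_ne_of_ne h1 h2]
      have hcardq : (F.filter fun y => A.pos (t+1) y < A.pos (t+1) q).card
          = (F.filter fun y => A.pos t y < A.pos t (γ t)).card := by
        apply Finset.card_bij' (fun y _ => Equiv.swap p q y) (fun y _ => Equiv.swap p q y)
        · intro a ha
          rw [Finset.mem_filter] at ha ⊢
          refine ⟨hswap _ ha.1, ?_⟩
          have := ha.2
          rw [Fin.lt_def, posE, posE, Equiv.swap_apply_right] at this
          rw [Fin.lt_def, hcp]
          exact this
        · intro a ha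
          rw [Finset.mem_filter] at ha ⊢
          refine ⟨hswap _ ha.1, ?_⟩
          have := ha.2
          rw [Fin.lt_def, hcp] at this
          rw [Fin.lt_def, posE, posE, Equiv.swap_apply_self, Equiv.swap_apply_right]
          exact this
        · intro a _; exact Equiv.swap_apply_self p q a
        · intro a _; exact Equiv.swap_apply_self p q a
      have hγ1 : γ (t+1) = q :=
        kth_unique (A.pos (t+1)) F hcF1 hqF (by rw [hcard1, hcardq, hcard])
      have hwt : ∀ z : Fin n, wt blue (Equiv.swap p q z) = wt blue z := by
        intro z
        rcases eq_or_ne z p with rfl | h1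
        · rw [Equiv.swap_apply_left]; simp [wt, hF _ hpF, hF _ hqF]
        rcases eq_or_ne z q with rfl | h2
        · rw [Equiv.swap_apply_right]; simp [wt, hF _ hpF, hF _ hqF]
        · rw [Equiv.swap_apply_of_ne_of_ne h1 h2]
      have heq : A.cweight blue γ (t+1) = A.cweight blue γ t := by
        unfold cweight
        rw [hγ1, hcp]
        simp only [hs, Equiv.trans_apply, Equiv.swap_apply_right]
        calc ∑ x : Fin n, (if A.pos t (Equiv.swap p q x) < A.pos t p then wt blue x else 0)
            = ∑ x : Fin n, (if A.pos t (Equiv.swap p q x) < A.pos t p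
                then wt blue (Equiv.swap p q x) else 0) := by
              refine Finset.sum_congr rfl fun x _ => ?_
              rw [hwt]
          _ = ∑ x : Fin n, (if A.pos t x < A.pos t p then wt blue x else 0) :=
              Equiv.sum_comp (Equiv.swap p q) (fun z => if A.pos t z < A.pos t p then wt blue z else 0)
      rw [h1, h2] at heq; omega
    · -- case (ii): f = p moves right past blue x = q
      have hpF : p ∈ F := by rw [← hcp]; exact hcF
      have hfilt : (F.filter fun y => A.pos (t+1) y < A.pos (t+1) p)
          = (F.filter fun y => A.pos t y < A.pos t (γ t)) := by
        ext y
        simp only [Finset.mem_filter, Fin.lt_def, hcp, posP]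
        refine and_congr_right fun hy => ?_
        have h1 : y ≠ q := fun h => hqF (h ▸ hy)
        rcases eq_or_ne y p with rfl | h2
        · rw [posP]; omega
        · rw [posO y h2 h1]
          have := np y h2
          omega
      have hγ1 : γ (t+1) = p :=
        kth_unique (A.pos (t+1)) F hcF1 hpF (by rw [hcard1, hfilt, hcard])
      have hA := sum_corr (fun x => if (A.pos (t+1) x : ℕ) < (A.pos t p : ℕ) + 1 then wt blue x else 0)
        (fun x => if (A.pos t x : ℕ) < (A.pos t p : ℕ) then wt blue x else 0) p q hpq'
        (fun x hx1 hx2 => by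
          simp only [posO x hx1 hx2]
          have := np x hx1
          exact if_congr (by omega) rfl rfl)
      simp only [posP, posQ, hpq, lt_self_iff_false, if_false, Nat.lt_succ_self, if_true,
        if_neg (by omega : ¬ (A.pos t p : ℕ) + 1 < (A.pos t p : ℕ))] at hA
      have hchg : A.cweight blue γ (t+1) = A.cweight blue γ t + wt blue q := by
        rw [cw, cw, hγ1, hcp, posP, hA]
        ring
      have hwq : blue q = true := by
        rw [h1, h2] at hchg
        by_contra hbq
        simp only [Bool.not_eq_true] at hbq
        simp only [wt, hbq, Bool.false_eq_true, if_false] at hchg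
        omega
      exact ⟨p, q, hpF, hqF, ⟨hpq', hs⟩, Or.inr ⟨hpq, hwq⟩⟩
  · by_cases hcq : γ t = q
    · by_cases hpF : p ∈ F
      · -- both in F (symmetric): contradiction
        exfalso
        have hqF : q ∈ F := by rw [← hcq]; exact hcF
        have hswap : ∀ y : Fin n, y ∈ F → Equiv.swap p q y ∈ F := by
          intro y hy
          rcases eq_or_ne y p with rfl | h1
          · rwa [Equiv.swap_apply_left]
          rcases eq_or_ne y q with rfl | h2
          · rwa [Equiv.swap_apply_right]
          · rwa [Equiv.swap_apply_of_ne_of_ne h1 h2]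
        have hcardp : (F.filter fun y => A.pos (t+1) y < A.pos (t+1) p).card
            = (F.filter fun y => A.pos t y < A.pos t (γ t)).card := by
          apply Finset.card_bij' (fun y _ => Equiv.swap p q y) (fun y _ => Equiv.swap p q y)
          · intro a ha
            rw [Finset.mem_filter] at ha ⊢
            refine ⟨hswap _ ha.1, ?_⟩
            have := ha.2
            rw [Fin.lt_def, posE, posE, Equiv.swap_apply_left] at this
            rw [Fin.lt_def, hcq]
            exact this
          · intro a ha
            rw [Finset.mem_filter] at ha ⊢
            refine ⟨hswap _ ha.1, ?_⟩
            have := ha.2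
            rw [Fin.lt_def, hcq] at this
            rw [Fin.lt_def, posE, posE, Equiv.swap_apply_self, Equiv.swap_apply_left]
            exact this
          · intro a _; exact Equiv.swap_apply_self p q a
          · intro a _; exact Equiv.swap_apply_self p q a
        have hγ1 : γ (t+1) = p :=
          kth_unique (A.pos (t+1)) F hcF1 hpF (by rw [hcard1, hcardp, hcard])
        have hwt : ∀ z : Fin n, wt blue (Equiv.swap p q z) = wt blue z := by
          intro z
          rcases eq_or_ne z p with rfl | h1
          · rw [Equiv.swap_apply_left]; simp [wt, hF _ hpF, hF _ hqF]
          rcases eq_or_ne z q with rfl | h2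
          · rw [Equiv.swap_apply_right]; simp [wt, hF _ hpF, hF _ hqF]
          · rw [Equiv.swap_apply_of_ne_of_ne h1 h2]
        have heq : A.cweight blue γ (t+1) = A.cweight blue γ t := by
          unfold cweight
          rw [hγ1, hcq]
          simp only [hs, Equiv.trans_apply, Equiv.swap_apply_left]
          calc ∑ x : Fin n, (if A.pos t (Equiv.swap p q x) < A.pos t q then wt blue x else 0)
              = ∑ x : Fin n, (if A.pos t (Equiv.swap p q x) < A.pos t q
                  then wt blue (Equiv.swap p q x) else 0) := by
                refine Finset.sum_congr rfl fun x _ => ?_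
                rw [hwt]
            _ = ∑ x : Fin n, (if A.pos t x < A.pos t q then wt blue x else 0) :=
                Equiv.sum_comp (Equiv.swap p q) (fun z => if A.pos t z < A.pos t q then wt blue z else 0)
        rw [h1, h2] at heq; omega
      · -- case (i): f = q moves left past red x = p
        have hqF : q ∈ F := by rw [← hcq]; exact hcF
        have hfilt : (F.filter fun y => A.pos (t+1) y < A.pos (t+1) q)
            = (F.filter fun y => A.pos t y < A.pos t (γ t)) := by
          ext y
          simp only [Finset.mem_filter, Fin.lt_def, hcq, hpq, posQ]
          refine and_congr_right fun hy => ?_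
          have h1 : y ≠ p := fun h => hpF (h ▸ hy)
          rcases eq_or_ne y q with rfl | h2
          · rw [posQ, hpq]; omega
          · rw [posO y h1 h2]
            have := np y h1
            omega
        have hγ1 : γ (t+1) = q :=
          kth_unique (A.pos (t+1)) F hcF1 hqF (by rw [hcard1, hfilt, hcard])
        have hA := sum_corr (fun x => if (A.pos (t+1) x : ℕ) < (A.pos t p : ℕ) then wt blue x else 0)
          (fun x => if (A.pos t x : ℕ) < (A.pos t p : ℕ) + 1 then wt blue x else 0) p q hpq'
          (fun x hx1 hx2 => by
            simp only [posO x hx1 hx2]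
            have := np x hx1
            exact if_congr (by omega) rfl rfl)
        simp only [posP, posQ, hpq, lt_self_iff_false, if_false, Nat.lt_succ_self, if_true,
          if_neg (by omega : ¬ (A.pos t p : ℕ) + 1 < (A.pos t p : ℕ))] at hA
        have hchg : A.cweight blue γ (t+1) = A.cweight blue γ t - wt blue p := by
          rw [cw, cw, hγ1, hcq, posQ, hpq, hA]
          ring
        have hwp : blue p = false := by
          rw [h1, h2] at hchg
          by_contra hbp
          simp only [Bool.not_eq_false] at hbp
          simp only [wt, hbp, if_true] at hchg
          omega
        have hwtp : wt blue p = -1 := by simp [wt, hwp]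
        have hminpq : min (A.pos t q : ℕ) (A.pos t p : ℕ) = (A.pos t p : ℕ) := by
          rw [hpq]; omega
        have hsum : (∑ x : Fin n, if (A.pos t x : ℕ) < min (A.pos t q : ℕ) (A.pos t p : ℕ)
            then wt blue x else 0) = (δ : ℤ) := by
          rw [hminpq]
          have hc : A.cweight blue γ t
              = ∑ x : Fin n, if (A.pos t x : ℕ) < (A.pos t p : ℕ) + 1 then wt blue x else 0 := by
            rw [cw, hcq, hpq]
          have hD := sum_corr (fun x => if (A.pos t x : ℕ) < (A.pos t p : ℕ) then wt blue x else 0)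
            (fun x => if (A.pos t x : ℕ) < (A.pos t p : ℕ) + 1 then wt blue x else 0) p q hpq'
            (fun x hx1 hx2 => by
              have := np x hx1
              exact if_congr (by omega) rfl rfl)
          simp only [hpq, lt_self_iff_false, if_false, Nat.lt_succ_self, if_true,
            if_neg (by omega : ¬ (A.pos t p : ℕ) + 1 < (A.pos t p : ℕ)),
            if_neg (by omega : ¬ (A.pos t p : ℕ) + 1 < (A.pos t p : ℕ) + 1)] at hD
          rw [hD, ← hc, h1, hwtp]
          ring
        have hfcard : (F.filter (fun y =>
            (A.pos t y : ℕ) < min (A.pos t q : ℕ) (A.pos t p : ℕ))).card = k - 1 := by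
          rw [← hcard]
          congr 1
          ext y
          simp only [Finset.mem_filter, Fin.lt_def, hcq, hpq, hminpq]
          refine and_congr_right fun hy => ?_
          have h1 : y ≠ p := fun h => hpF (h ▸ hy)
          have := np y h1
          omega
        refine ⟨q, p, hqF, hpF, ⟨hpq'.symm, ?_⟩,
          Or.inl ⟨hpq, hwp, ⟨⟨hpq'.symm, ?_⟩, ?_, hsum⟩, hfcard⟩⟩
        · rw [Equiv.swap_comm]; exact hs
        · rw [Equiv.swap_comm]; exact hs
        · simp [hF _ hqF, hwp]
    · -- γ t ∉ {p, q}: contradiction, weight unchanged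
      exfalso
      have hMp : (A.pos t (γ t) : ℕ) ≠ (A.pos t p : ℕ) := np _ hcp
      have hMq : (A.pos t (γ t) : ℕ) ≠ (A.pos t p : ℕ) + 1 := by
        intro h; exact hcq ((A.pos t).injective (Fin.val_injective (h.trans hpq.symm)))
      have hfilt : (F.filter fun y => A.pos (t+1) y < A.pos (t+1) (γ t))
          = (F.filter fun y => A.pos t y < A.pos t (γ t)) := by
        ext y
        simp only [Finset.mem_filter, Fin.lt_def, posO (γ t) hcp hcq]
        refine and_congr_right fun hy => ?_
        rcases eq_or_ne y p with rfl | h1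
        · rw [posP]; omega
        rcases eq_or_ne y q with rfl | h2
        · rw [posQ, hpq]; omega
        · rw [posO y h1 h2]
      have hγ1 : γ (t+1) = γ t :=
        kth_unique (A.pos (t+1)) F hcF1 hcF (by rw [hcard1, hfilt, hcard])
      have heq : A.cweight blue γ (t+1) = A.cweight blue γ t := by
        rw [cw, cw, hγ1, posO (γ t) hcp hcq]
        refine Finset.sum_congr rfl fun x _ => ?_
        rcases eq_or_ne x p with rfl | h1
        · rw [posP]; exact if_congr (by omega) rfl rfl
        rcases eq_or_ne x q with rfl | h2
        · rw [posQ, hpq]; exact if_congr (by omega) rfl rfl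
        · rw [posO x h1 h2]
      rw [h1, h2] at heq; omega
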